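/- Let G be a finite p-group with a unique A₂-subgroup K, and let N be a quotient G/Z where Z is a normal subgroup of G contained in K such that the image of K in G/Z is still an A₂-group. Then the image of K is the unique A₂-subgroup of G/Z. -/

import Mathlib

/-- `G` is a minimal non-abelian group: non-abelian, but all proper subgroups abelian. -/
def IsMinimalNonabelian (G : Type*) [Group G] : Prop :=
  (¬ ∀ a b : G, a * b = b * a) ∧
    ∀ H : Subgroup G, H ≠ ⊤ → ∀ a ∈ H, ∀ b ∈ H, a * b = b * a

/-- `G` is an `𝒜_t`-group: it has a non-abelian subgroup of index `p ^ (t-1)`,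
but all subgroups of index `p ^ t` are abelian. -/
def IsAGroup (p t : ℕ) (G : Type*) [Group G] : Prop :=
  (∃ H : Subgroup G, H.index = p ^ (t - 1) ∧ ¬ ∀ a ∈ H, ∀ b ∈ H, a * b = b * a) ∧
    ∀ H : Subgroup G, H.index = p ^ t → ∀ a ∈ H, ∀ b ∈ H, a * b = b * a


section Aux

variable {p : ℕ} [Fact p.Prime]

lemma exists_index_p {P : Type*} [Group P] [Finite P] (hP : IsPGroup p P)
    {H : Subgroup P} (hH : H ≠ ⊤) : ∃ H' : Subgroup P, H ≤ H' ∧ H'.index = p := by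
  obtain ⟨M, hM, hHM⟩ := (IsCoatomic.eq_top_or_exists_le_coatom H).resolve_left hH
  refine ⟨M, hHM, ?_⟩
  haveI : Group.IsNilpotent P := hP.isNilpotent
  haveI : M.Normal := Subgroup.NormalizerCondition.normal_of_coatom _ (normalizerCondition_of_isNilpotent) hM
  have hQ : IsPGroup p (P ⧸ M) := hP.to_quotient M
  have hind : M.index ≠ 1 := fun h => hM.1 (Subgroup.index_eq_one.mp h)
  obtain ⟨n, hn⟩ := hP.index M
  have hn1 : 1 ≤ n := by
    rcases Nat.eq_zero_or_pos n with h0 | h; · simp [h0, hn] at hind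
    exact h
  have hdvd : p ∣ Nat.card (P ⧸ M) := by
    rw [← M.index_eq_card, hn]
    exact dvd_pow_self p (by omega)
  obtain ⟨x, hx⟩ := exists_prime_orderOf_dvd_card' (G := P ⧸ M) p hdvd
  have hxtop : Subgroup.zpowers x = ⊤ := by
    obtain ⟨y, hy⟩ := QuotientGroup.mk'_surjective M x
    have hyM : y ∉ M := by
      intro hmem
      have : x = 1 := by rw [← hy]; simpa [QuotientGroup.eq_one_iff] using hmem
      rw [this, orderOf_one] at hx
      exact (Fact.out : p.Prime).one_lt.ne' hx.symm
    have hlt : M < (Subgroup.zpowers x).comap (QuotientGroup.mk' M) := by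
      refine lt_of_le_of_ne ?_ ?_
      · intro g hg
        have h1 : (QuotientGroup.mk' M) g = 1 := (QuotientGroup.eq_one_iff g).mpr hg
        simp only [Subgroup.mem_comap, h1]
        exact one_mem _
      · intro heq
        exact hyM (heq ▸ (by simpa [Subgroup.mem_comap, hy] using Subgroup.mem_zpowers x))
    have htop := hM.2 _ hlt
    have := Subgroup.map_comap_eq_self_of_surjective (QuotientGroup.mk'_surjective M)
      (Subgroup.zpowers x)
    rw [htop, Subgroup.map_top_of_surjective _ (QuotientGroup.mk'_surjective M)] at this
    exact this.symm
  rw [M.index_eq_card, ← hx, ← Nat.card_zpowers x, hxtop]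
  exact Subgroup.card_top.symm

section Rel
variable {G : Type*} [Group G] [Finite G]

lemma subgroupOf_map_subtype_eq {M : Subgroup G} (H : Subgroup ↥M) :
    (H.map M.subtype).subgroupOf M = H :=
  Subgroup.comap_map_eq_self_of_injective M.subtype_injective H

lemma relindex_map_subtype {M : Subgroup G} (H : Subgroup ↥M) :
    (H.map M.subtype).relIndex M = H.index := by
  rw [Subgroup.relIndex, subgroupOf_map_subtype_eq]

lemma map_subgroupOf_eq {N M : Subgroup G} (h : N ≤ M) :
    (N.subgroupOf M).map M.subtype = N := by
  rw [Subgroup.subgroupOf_map_subtype, inf_eq_left.mpr h]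

lemma comm_map_subtype {M : Subgroup G} (H : Subgroup ↥M) :
    (∀ a ∈ H.map M.subtype, ∀ b ∈ H.map M.subtype, a * b = b * a) ↔
      (∀ a ∈ H, ∀ b ∈ H, a * b = b * a) := by
  constructor
  · intro h a ha b hb
    exact Subtype.ext (h a ⟨a, ha, rfl⟩ b ⟨b, hb, rfl⟩)
  · rintro h _ ⟨a, ha, rfl⟩ _ ⟨b, hb, rfl⟩
    exact congrArg Subtype.val (h a ha b hb)

lemma comm_mono {N N' : Subgroup G} (h : N ≤ N')
    (hc : ∀ a ∈ N', ∀ b ∈ N', a * b = b * a) :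
    ∀ a ∈ N, ∀ b ∈ N, a * b = b * a :=
  fun a ha b hb => hc a (h ha) b (h hb)

lemma exists_relindex_p (hG : IsPGroup p G) {N M : Subgroup G}
    (hNM : N ≤ M) (hne : N ≠ M) :
    ∃ N' : Subgroup G, N ≤ N' ∧ N' ≤ M ∧ N'.relIndex M = p := by
  have hne' : N.subgroupOf M ≠ ⊤ := by
    intro h
    exact hne (le_antisymm hNM (Subgroup.subgroupOf_eq_top.mp h))
  obtain ⟨H', hle, hind⟩ := exists_index_p (hG.to_subgroup M) hne'
  refine ⟨H'.map M.subtype, ?_, Subgroup.map_subtype_le _, ?_⟩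
  · rw [← map_subgroupOf_eq hNM]
    exact Subgroup.map_mono hle
  · rw [relindex_map_subtype, hind]

lemma relindex_ne_one_of_ne {N M : Subgroup G} (hNM : N ≤ M) (hne : N ≠ M) :
    N.relIndex M ≠ 1 := by
  intro h
  exact hne (le_antisymm hNM (Subgroup.subgroupOf_eq_top.mp (Subgroup.index_eq_one.mp h)))

lemma eq_of_relindex_eq_one {N M : Subgroup G} (hNM : N ≤ M) (h : N.relIndex M = 1) :
    N = M :=
  le_antisymm hNM (Subgroup.subgroupOf_eq_top.mp (Subgroup.index_eq_one.mp h))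

lemma exists_relindex_p2 (hG : IsPGroup p G) {N M : Subgroup G}
    (hNM : N ≤ M) (hdvd : p ^ 2 ∣ N.relIndex M) :
    ∃ N' : Subgroup G, N ≤ N' ∧ N' ≤ M ∧ N'.relIndex M = p ^ 2 := by
  have hp1 : 1 < p := (Fact.out : p.Prime).one_lt
  have hne : N ≠ M := by
    rintro rfl
    rw [Subgroup.relIndex_self] at hdvd
    exact absurd (Nat.le_of_dvd one_pos hdvd) (by nlinarith)
  obtain ⟨N₁, hN1, hN1M, hrel1⟩ := exists_relindex_p hG hNM hne
  have hmul : N.relIndex N₁ * N₁.relIndex M = N.relIndex M :=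
    Subgroup.relIndex_mul_relIndex N N₁ M hN1 hN1M
  have hne1 : N ≠ N₁ := by
    rintro rfl
    rw [Subgroup.relIndex_self, one_mul] at hmul
    rw [← hmul, hrel1] at hdvd
    exact absurd (Nat.le_of_dvd (by omega) hdvd) (by nlinarith)
  obtain ⟨N₂, hN2, hN2N1, hrel2⟩ := exists_relindex_p hG hN1 hne1
  refine ⟨N₂, hN2, hN2N1.trans hN1M, ?_⟩
  have := Subgroup.relIndex_mul_relIndex N₂ N₁ M hN2N1 hN1M
  rw [hrel2, hrel1] at this
  rw [← this, sq]

lemma isAGroup_two_iff (M : Subgroup G) :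
    IsAGroup p 2 ↥M ↔
      ((∃ N : Subgroup G, N ≤ M ∧ N.relIndex M = p ∧
          ¬ ∀ a ∈ N, ∀ b ∈ N, a * b = b * a) ∧
        ∀ N : Subgroup G, N ≤ M → N.relIndex M = p ^ 2 →
          ∀ a ∈ N, ∀ b ∈ N, a * b = b * a) := by
  constructor
  · rintro ⟨⟨H, hHi, hHn⟩, hab⟩
    constructor
    · refine ⟨H.map M.subtype, Subgroup.map_subtype_le _, ?_, ?_⟩
      · rw [relindex_map_subtype, hHi]; norm_num
      · rw [comm_map_subtype]; exact hHn
    · intro N hNM hrel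
      have : (N.subgroupOf M).index = p ^ 2 := by
        rw [← Subgroup.relIndex, hrel]
      have hc := hab _ this
      have := (comm_map_subtype (M := M) (N.subgroupOf M)).mpr hc
      rw [map_subgroupOf_eq hNM] at this
      exact this
  · rintro ⟨⟨N, hNM, hrel, hNn⟩, hab⟩
    constructor
    · refine ⟨N.subgroupOf M, ?_, ?_⟩
      · rw [← Subgroup.relIndex, hrel]; norm_num
      · intro hc
        have := (comm_map_subtype (M := M) (N.subgroupOf M)).mpr hc
        rw [map_subgroupOf_eq hNM] at this
        exact hNn this
    · intro H hHi
      rw [← comm_map_subtype]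
      exact hab _ (Subgroup.map_subtype_le _) (by rw [relindex_map_subtype, hHi])

lemma exists_A2_subgroup (hG : IsPGroup p G) :
    ∀ n : ℕ, ∀ M : Subgroup G, Nat.card M ≤ n →
      (∃ N : Subgroup G, N ≤ M ∧ N ≠ M ∧ ¬ ∀ a ∈ N, ∀ b ∈ N, a * b = b * a) →
      ∃ K' : Subgroup G, K' ≤ M ∧ IsAGroup p 2 ↥K' := by
  have hp1 : 1 < p := (Fact.out : p.Prime).one_lt
  intro n
  induction n with
  | zero => intro M hM _; exact absurd hM (by simpa using Nat.card_pos.ne')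
  | succ n ih =>
    intro M hcard ⟨N, hNM, hne, hNn⟩
    by_cases hab : ∀ N' : Subgroup G, N' ≤ M → N'.relIndex M = p ^ 2 →
        ∀ a ∈ N', ∀ b ∈ N', a * b = b * a
    · refine ⟨M, le_refl M, (isAGroup_two_iff M).mpr ⟨?_, hab⟩⟩
      obtain ⟨N', hN1, hN2, hN3⟩ := exists_relindex_p hG hNM hne
      exact ⟨N', hN2, hN3, fun hc => hNn (comm_mono hN1 hc)⟩
    · push_neg at hab
      obtain ⟨N', hN'M, hrel, hN'n⟩ := hab
      have hN'n' : ¬ ∀ a ∈ N', ∀ b ∈ N', a * b = b * a := by push_neg; exact hN'n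
      have hne' : N' ≠ M := by
        intro h
        rw [h, Subgroup.relIndex_self] at hrel
        nlinarith
      obtain ⟨N₁, hN1, hN1M, hrel1⟩ := exists_relindex_p hG hN'M hne'
      have hmul : N'.relIndex N₁ * N₁.relIndex M = N'.relIndex M :=
        Subgroup.relIndex_mul_relIndex N' N₁ M hN1 hN1M
      rw [hrel1, hrel, sq] at hmul
      have hrelN1 : N'.relIndex N₁ = p := Nat.eq_of_mul_eq_mul_right (by omega) hmul
      have hneN1 : N' ≠ N₁ := fun h => (by omega : p ≠ 1)
        (by rw [h, Subgroup.relIndex_self] at hrelN1; omega)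
      have hN1neM : N₁ ≠ M := by
        intro h
        rw [h, Subgroup.relIndex_self] at hrel1
        omega
      have hcard1 : Nat.card N₁ < Nat.card M := by
        refine lt_of_le_of_ne (Subgroup.card_le_of_le hN1M) ?_
        intro h
        exact hN1neM (Subgroup.eq_of_le_of_card_ge hN1M h.ge)
      obtain ⟨K', hK'le, hK'⟩ := ih N₁ (by omega) ⟨N', hN1, hneN1, hN'n'⟩
      exact ⟨K', hK'le.trans hN1M, hK'⟩

end Rel

end Aux

theorem stmt17 {p : ℕ} (hp : p.Prime) {G : Type*} [Group G] [Finite G]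
    (hG : IsPGroup p G) {K : Subgroup G} (hK : IsAGroup p 2 ↥K)
    (huniq : ∀ K' : Subgroup G, IsAGroup p 2 ↥K' → K' = K)
    {Z : Subgroup G} [Z.Normal] (hZK : Z ≤ K)
    (him : IsAGroup p 2 ↥(K.map (QuotientGroup.mk' Z))) :
    ∀ L : Subgroup (G ⧸ Z), IsAGroup p 2 ↥L → L = K.map (QuotientGroup.mk' Z) := by
  haveI := Fact.mk hp
  intro L hL
  have hQ : IsPGroup p (G ⧸ Z) := hG.to_quotient Z
  set f := QuotientGroup.mk' Z with hf
  have hfs : Function.Surjective f := QuotientGroup.mk'_surjective Z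
  set M := L.comap f with hMdef
  have hML : M.map f = L := Subgroup.map_comap_eq_self_of_surjective hfs L
  obtain ⟨⟨N, hNL, hNrel, hNna⟩, habL⟩ := (isAGroup_two_iff L).mp hL
  have hcomap_le : N.comap f ≤ M := Subgroup.comap_mono hNL
  have hcomap_ne : N.comap f ≠ M := by
    intro h
    have h2 : N = L := by
      rw [← Subgroup.map_comap_eq_self_of_surjective hfs N, h, hML]
    rw [h2, Subgroup.relIndex_self] at hNrel
    have := hp.one_lt
    omega
  have hcomap_na : ¬ ∀ a ∈ N.comap f, ∀ b ∈ N.comap f, a * b = b * a := by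
    intro hc
    apply hNna
    intro a ha b hb
    obtain ⟨a', rfl⟩ := hfs a
    obtain ⟨b', rfl⟩ := hfs b
    have := hc a' (by simpa [Subgroup.mem_comap] using ha)
      b' (by simpa [Subgroup.mem_comap] using hb)
    rw [← map_mul, ← map_mul, this]
  obtain ⟨K', hK'M, hK'A⟩ := exists_A2_subgroup hG (Nat.card M) M le_rfl
    ⟨N.comap f, hcomap_le, hcomap_ne, hcomap_na⟩
  have hKM : K ≤ M := huniq K' hK'A ▸ hK'M
  have hJL : K.map f ≤ L := by
    rw [← hML]; exact Subgroup.map_mono hKM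
  by_contra hne0
  have hJne : K.map f ≠ L := fun h => hne0 h.symm
  obtain ⟨⟨N₀, hN₀J, hN₀rel, hN₀na⟩, _⟩ := (isAGroup_two_iff (K.map f)).mp him
  have hdvd : p ^ 2 ∣ N₀.relIndex L := by
    have hmul := Subgroup.relIndex_mul_relIndex N₀ (K.map f) L hN₀J hJL
    obtain ⟨k, hk⟩ := (hQ.to_subgroup L).index ((K.map f).subgroupOf L)
    have hrelJ : (K.map f).relIndex L = p ^ k := hk
    have hk1 : 1 ≤ k := by
      rcases Nat.eq_zero_or_pos k with h0 | h
      · exfalso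
        apply relindex_ne_one_of_ne hJL hJne
        rw [hrelJ, h0, pow_zero]
      · exact h
    rw [← hmul, hN₀rel, hrelJ, ← pow_succ']
    exact pow_dvd_pow p (by omega)
  obtain ⟨N₁, hN₁0, hN₁L, hN₁rel⟩ := exists_relindex_p2 hQ (hN₀J.trans hJL) hdvd
  exact hN₀na (comm_mono hN₁0 (habL N₁ hN₁L hN₁rel))
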